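/- arXiv:1501.03466 — 2 statements merged into one kernel-verified Lean document; each statement's English description precedes it below -/
import Mathlib

section
/- There exists a continuous linear automorphism R : ℓ∞ → ℓ∞ (a bijective bounded linear operator with bounded inverse) such that R f = f for every f ∈ c₀, R is not the identity, and R is not given by a c₀-matrix. In particular, there exist two distinct automorphisms of ℓ∞ preserving c₀ which agree on c₀. -/
open Filter Topology

noncomputable section

/-- The Banach space `ℓ∞` of bounded real sequences with the sup norm. -/
abbrev ellInfty : Type := BoundedContinuousFunction ℕ ℝ

/-- `c₀`, the subspace of `ℓ∞` of sequences converging to `0`. -/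
def czero : Submodule ℝ ellInfty where
  carrier := {f | Tendsto (⇑f) atTop (𝓝 (0 : ℝ))}
  add_mem' := by intro a b ha hb; simpa [Pi.add_def] using ha.add hb
  zero_mem' := by
    show Tendsto _ _ _
    simp only [BoundedContinuousFunction.coe_zero]
    exact tendsto_const_nhds
  smul_mem' := by intro c f hf; simpa using hf.const_mul c

lemma czero_isClosed : IsClosed (czero : Set ellInfty) := by
  have : closure (czero : Set ellInfty) ⊆ (czero : Set ellInfty) := by
    intro f hf
    show Tendsto (⇑f) atTop (𝓝 (0 : ℝ))
    rw [NormedAddCommGroup.tendsto_nhds_zero]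
    intro ε hε
    obtain ⟨g, hg, hdist⟩ := Metric.mem_closure_iff.mp hf (ε / 2) (by linarith)
    have hg' : Tendsto (⇑g) atTop (𝓝 (0 : ℝ)) := hg
    have := (NormedAddCommGroup.tendsto_nhds_zero.mp hg') (ε / 2) (by linarith)
    filter_upwards [this] with n hn
    have h1 : dist (f n) (g n) ≤ dist f g := BoundedContinuousFunction.dist_coe_le_dist n
    calc ‖f n‖ ≤ ‖f n - g n‖ + ‖g n‖ := by
          simpa using norm_add_le (f n - g n) (g n)
      _ < ε / 2 + ε / 2 := by
          apply add_lt_add_of_le_of_lt _ hn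
          calc ‖f n - g n‖ = dist (f n) (g n) := (dist_eq_norm _ _).symm
            _ ≤ dist f g := h1
            _ ≤ ε / 2 := le_of_lt hdist
      _ = ε := by ring
  exact isClosed_of_closure_subset this

instance : IsClosed ((czero : Submodule ℝ ellInfty) : Set ellInfty) := czero_isClosed


lemma piQ_bound (m : ellInfty) : ‖czero.mkQ m‖ ≤ 1 * ‖m‖ := by
  rw [one_mul, Submodule.mkQ_apply]
  exact Submodule.Quotient.norm_mk_le czero m

def piQ : ellInfty →L[ℝ] (ellInfty ⧸ czero) :=
  ⟨czero.mkQ, by exact continuous_quot_mk⟩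

lemma piQ_apply (f : ellInfty) : piQ f = Submodule.Quotient.mk f := by
  rfl

lemma one_notin_czero : (1 : ellInfty) ∉ czero := by
  intro h
  have h' : Tendsto (⇑(1 : ellInfty)) atTop (𝓝 (0 : ℝ)) := h
  simp only [BoundedContinuousFunction.coe_one] at h'
  exact one_ne_zero (tendsto_nhds_unique tendsto_const_nhds h')

lemma piQ_one_ne : piQ (1 : ellInfty) ≠ 0 := by
  intro h
  rw [piQ_apply, Submodule.Quotient.mk_eq_zero] at h
  exact one_notin_czero h

lemma exists_phi : ∃ φ : ellInfty →L[ℝ] ℝ, (∀ f ∈ czero, φ f = 0) ∧ φ 1 ≠ 0 := by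
  obtain ⟨g, -, hg⟩ := exists_dual_vector ℝ (piQ (1 : ellInfty)) (fun h => piQ_one_ne ((@norm_eq_zero _ (Submodule.Quotient.normedAddCommGroup czero).toNormedAddGroup (piQ (1 : ellInfty))).mp h))
  refine ⟨g.comp piQ, fun f hf => ?_, ?_⟩
  · have : piQ f = 0 := by
      rw [piQ_apply, Submodule.Quotient.mk_eq_zero]; exact hf
    simp [this]
  · simp only [ContinuousLinearMap.comp_apply]
    rw [hg]
    intro h0
    exact piQ_one_ne ((@norm_eq_zero _ (Submodule.Quotient.normedAddCommGroup czero).toNormedAddGroup (piQ (1 : ellInfty))).mp (by exact_mod_cast h0))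

def phi : ellInfty →L[ℝ] ℝ := Classical.choose exists_phi

lemma phi_vanish {f : ellInfty} (hf : f ∈ czero) : phi f = 0 :=
  (Classical.choose_spec exists_phi).1 f hf

lemma phi_one_ne : phi (1 : ellInfty) ≠ 0 := (Classical.choose_spec exists_phi).2

/-- unit vectors -/
def ee (k : ℕ) : ellInfty :=
  ⟨⟨fun n => if n = k then 1 else 0, continuous_of_discreteTopology⟩, 2, by
    intro x y
    dsimp
    rw [Real.dist_eq]
    split_ifs <;> norm_num⟩

lemma ee_apply (k n : ℕ) : ee k n = if n = k then 1 else 0 := rfl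

lemma ee_mem_czero (k : ℕ) : ee k ∈ czero := by
  show Tendsto (⇑(ee k)) atTop (𝓝 (0 : ℝ))
  apply (tendsto_const_nhds : Tendsto (fun _ : ℕ => (0:ℝ)) atTop _).congr'
  filter_upwards [eventually_gt_atTop k] with n hn
  rw [ee_apply, if_neg (Nat.ne_of_gt hn)]

lemma phi_ee : phi (ee 0) = 0 := phi_vanish (ee_mem_czero 0)

def TT : ellInfty →L[ℝ] ellInfty :=
  ContinuousLinearMap.id ℝ ellInfty + phi.smulRight (ee 0)

def SS : ellInfty →L[ℝ] ellInfty :=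
  ContinuousLinearMap.id ℝ ellInfty - phi.smulRight (ee 0)

lemma TT_apply (f : ellInfty) : TT f = f + phi f • ee 0 := rfl

lemma SS_TT (f : ellInfty) : SS (TT f) = f := by
  simp [TT, SS, ContinuousLinearMap.sub_apply, ContinuousLinearMap.add_apply,
    map_add, map_smul, phi_ee, smul_smul]

lemma TT_SS (f : ellInfty) : TT (SS f) = f := by
  simp [TT, SS, ContinuousLinearMap.sub_apply, ContinuousLinearMap.add_apply,
    map_sub, map_smul, phi_ee, smul_smul]

def Req : ellInfty ≃L[ℝ] ellInfty :=
  ContinuousLinearEquiv.equivOfInverse TT SS SS_TT TT_SS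

lemma Req_apply (f : ellInfty) : Req f = f + phi f • ee 0 := by
  rw [Req, ContinuousLinearEquiv.equivOfInverse_apply, TT_apply]

lemma Req_fixes {f : ellInfty} (hf : f ∈ czero) : Req f = f := by
  rw [Req_apply, phi_vanish hf]
  simp

lemma Req_one : Req (1 : ellInfty) ≠ 1 := by
  intro h
  have h0 : (Req (1 : ellInfty)) 0 = (1 : ellInfty) 0 := by rw [h]
  rw [Req_apply] at h0
  simp only [BoundedContinuousFunction.coe_add, BoundedContinuousFunction.coe_smul,
    Pi.add_apply, Pi.smul_apply, BoundedContinuousFunction.coe_one, Pi.one_apply,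
    ee_apply, if_pos rfl, smul_eq_mul, mul_one] at h0
  norm_num at h0
  exact phi_one_ne h0

/-- `R : ℓ∞ → ℓ∞` is given by the `c₀`-matrix `b`: the rows of `b` are absolutely summable
with uniformly bounded `ℓ₁`-norms, the columns of `b` converge to `0`, and `R` acts by
matrix multiplication by `b`. -/
structure IsC0Matrix (R : ellInfty →L[ℝ] ellInfty) (b : ℕ → ℕ → ℝ) : Prop where
  rows_summable : ∀ i, Summable fun j => |b i j|
  rows_bounded : ∃ C : ℝ, ∀ i, (∑' j, |b i j|) ≤ C
  cols_vanish : ∀ j, Tendsto (fun i => b i j) atTop (𝓝 (0 : ℝ))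
  matrix_repr : ∀ f : ellInfty, ∀ i, R f i = ∑' j, b i j * f j

/-- There is a continuous linear automorphism of `ℓ∞` which is the identity on `c₀` but not
the identity, and which is not given by a `c₀`-matrix; in particular there are two distinct
automorphisms of `ℓ∞`, both preserving `c₀`, which agree on `c₀`. -/
theorem statement5 :
    (∃ R : ellInfty ≃L[ℝ] ellInfty,
      (∀ f ∈ czero, R f = f) ∧
      (∃ f : ellInfty, R f ≠ f) ∧
      ¬ ∃ b : ℕ → ℕ → ℝ, IsC0Matrix (R : ellInfty →L[ℝ] ellInfty) b) ∧
    (∃ R₁ R₂ : ellInfty ≃L[ℝ] ellInfty, R₁ ≠ R₂ ∧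
      (∀ f ∈ czero, R₁ f ∈ czero) ∧ (∀ f ∈ czero, R₂ f ∈ czero) ∧
      ∀ f ∈ czero, R₁ f = R₂ f) := by
  constructor
  · refine ⟨Req, fun f hf => Req_fixes hf, ⟨1, Req_one⟩, ?_⟩
    rintro ⟨b, hb⟩
    -- the matrix must be the identity matrix
    have hbij : ∀ i k, b i k = if i = k then 1 else 0 := by
      intro i k
      have h1 := hb.matrix_repr (ee k) i
      have h2 : (Req.toContinuousLinearMap) (ee k) = ee k := Req_fixes (ee_mem_czero k)
      rw [h2] at h1
      have h3 : ∑' j, b i j * (ee k) j = b i k := by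
        rw [tsum_eq_single k]
        · rw [ee_apply, if_pos rfl, mul_one]
        · intro j hj
          rw [ee_apply, if_neg hj, mul_zero]
      rw [h3] at h1
      rw [← h1, ee_apply]
    -- but then R 1 would be 1 at coordinate 0
    have h4 := hb.matrix_repr 1 0
    have h5 : ∑' j, b 0 j * (1 : ellInfty) j = 1 := by
      have : ∀ j, b 0 j * (1 : ellInfty) j = if j = 0 then 1 else 0 := by
        intro j
        rw [hbij 0 j]
        simp [eq_comm]
      rw [tsum_congr this, tsum_ite_eq]
    rw [h5] at h4
    have h6 : (Req (1 : ellInfty)) 0 = 1 + phi 1 := by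
      rw [Req_apply]
      simp [ee_apply]
    have h7 : ((Req.toContinuousLinearMap) (1 : ellInfty)) 0 = (Req (1:ellInfty)) 0 := rfl
    rw [h7, h6] at h4
    have : phi (1 : ellInfty) = 0 := by linarith
    exact phi_one_ne this
  · refine ⟨Req, ContinuousLinearEquiv.refl ℝ ellInfty, ?_, ?_, ?_, ?_⟩
    · intro h
      apply Req_one
      rw [h]
      rfl
    · intro f hf; rw [Req_fixes hf]; exact hf
    · intro f hf; simpa using hf
    · intro f hf; rw [Req_fixes hf]; rfl
end
end

section
/- If R : ℓ∞ → ℓ∞ is a bounded linear operator with R f = 0 for every f ∈ c₀ (an antimatrix operator), then the induced bounded linear operator [R] : ℓ∞/c₀ → ℓ∞/c₀ (determined by [R] ∘ Q = Q ∘ R) factors through ℓ∞ (i.e., [R] = R₂ ∘ R₁ for some bounded linear operators R₁ : ℓ∞/c₀ → ℓ∞ and R₂ : ℓ∞ → ℓ∞/c₀) and is locally null. -/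
open Filter Topology

noncomputable section

/-- The quotient Banach space `ℓ∞/c₀`; `czero.mkQ : ℓ∞ → ℓ∞/c₀` is the quotient map. -/
abbrev ellInftyModCzero : Type := ellInfty ⧸ czero

/-- A bounded operator `T` on `ℓ∞/c₀` is *locally null* if for every infinite `A ⊆ ℕ`
there is an infinite `A₁ ⊆ A` such that `T (Q f) = 0` for every `f ∈ ℓ∞` vanishing
outside of `A₁`. -/
def LocallyNull (T : ellInftyModCzero →L[ℝ] ellInftyModCzero) : Prop :=
  ∀ A : Set ℕ, A.Infinite → ∃ A₁ ⊆ A, A₁.Infinite ∧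
    ∀ f : ellInfty, (∀ n ∉ A₁, f n = 0) → T (czero.mkQ f) = 0

/-! ### Auxiliary lemmas -/

lemma mem_czero_iff (f : ellInfty) : f ∈ czero ↔ Tendsto (⇑f) atTop (𝓝 (0:ℝ)) := Iff.rfl

lemma finsupp_tendsto (f : ℕ → ℝ) (h : {n | f n ≠ 0}.Finite) :
    Tendsto f atTop (𝓝 (0:ℝ)) := by
  have h2 : ∀ᶠ n in atTop, f n = 0 := by
    rw [← Nat.cofinite_eq_atTop]
    filter_upwards [h.eventually_cofinite_notMem] with n hn
    simpa using hn
  exact Tendsto.congr' (h2.mono (fun n hn => hn.symm)) tendsto_const_nhds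

lemma not_tendsto_exists (u : ℕ → ℝ) (h : ¬ Tendsto u atTop (𝓝 (0:ℝ))) :
    ∃ ε > 0, {n | ε ≤ |u n|}.Infinite := by
  by_contra hc
  push_neg at hc
  apply h
  rw [NormedAddCommGroup.tendsto_nhds_zero]
  intro ε hε
  have := (hc ε hε).eventually_cofinite_notMem
  rw [Nat.cofinite_eq_atTop] at this
  filter_upwards [this] with n hn
  simp only [Set.mem_setOf_eq, not_le] at hn
  simpa using hn

lemma small_finite (ε : ℝ) (hε : 0 < ε) : {k : ℕ | ε ≤ 1 / (k + 1 : ℝ)}.Finite := by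
  have h : {k : ℕ | ε ≤ 1 / (k + 1 : ℝ)} = {k : ℕ | ¬ (1 / (k + 1 : ℝ) < ε)} := by
    ext k; simp [not_lt]
  rw [h, ← Filter.eventually_cofinite, Nat.cofinite_eq_atTop]
  filter_upwards [(tendsto_one_div_add_atTop_nhds_zero_nat).eventually
    (eventually_lt_nhds hε)] with k hk
  exact hk

lemma ratSeq_ex (r : ℝ) (k : ℕ) :
    ∃ q : ℚ, r + 1 / (k + 2 : ℝ) < (q:ℝ) ∧ (q:ℝ) < r + 1 / (k + 1 : ℝ) := by
  have h : (1:ℝ) / (k + 2) < 1 / (k + 1) :=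
    div_lt_div_of_pos_left one_pos (by positivity) (by linarith)
  exact exists_rat_btwn (by linarith)

def ratSeq (r : ℝ) (k : ℕ) : ℚ := (ratSeq_ex r k).choose

lemma ratSeq_spec (r : ℝ) (k : ℕ) :
    r + 1 / (k + 2 : ℝ) < (ratSeq r k : ℝ) ∧ (ratSeq r k : ℝ) < r + 1 / (k + 1 : ℝ) :=
  (ratSeq_ex r k).choose_spec

lemma ratSeq_injective (r : ℝ) : Function.Injective (ratSeq r) := by
  have hanti : StrictAnti (fun k : ℕ => (ratSeq r k : ℝ)) := by
    apply strictAnti_nat_of_succ_lt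
    intro k
    have h1 := (ratSeq_spec r (k+1)).2
    have h2 := (ratSeq_spec r k).1
    have heq : ((k:ℝ) + 1 + 1) = (k + 2 : ℝ) := by ring
    push_cast at h1 h2 ⊢
    rw [heq] at h1
    linarith
  intro a b hab
  exact hanti.injective (by rw [hab])

lemma ratSeq_close (r : ℝ) (k : ℕ) (ε : ℝ) (hk : 1 / (k + 1 : ℝ) < ε) :
    |(ratSeq r k : ℝ) - r| < ε := by
  obtain ⟨h1, h2⟩ := ratSeq_spec r k
  rw [abs_lt]
  have : (0:ℝ) < 1 / (k + 2 : ℝ) := by positivity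
  constructor <;> linarith

lemma exists_ad_family (A : Set ℕ) (hA : A.Infinite) :
    ∃ B : ℝ → Set ℕ, (∀ r, B r ⊆ A) ∧ (∀ r, (B r).Infinite) ∧
      ∀ r r', r ≠ r' → (B r ∩ B r').Finite := by
  classical
  set e := hA.natEmbedding
  set d : ℚ ≃ ℕ := (Denumerable.eqv ℚ)
  set j : ℚ → ℕ := fun q => (e (d q) : ℕ) with hj
  have hjinj : Function.Injective j := by
    intro a b hab
    exact d.injective (e.injective (Subtype.ext hab))
  have hjmem : ∀ q, j q ∈ A := fun q => (e (d q)).2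
  refine ⟨fun r => j '' Set.range (ratSeq r), ?_, ?_, ?_⟩
  · rintro r n ⟨q, _, rfl⟩; exact hjmem q
  · intro r
    exact (Set.infinite_range_of_injective (ratSeq_injective r)).image hjinj.injOn
  · intro r r' hrr
    rw [← Set.image_inter hjinj]
    apply Set.Finite.image
    set ε := |r - r'| / 2 with hε
    have hεpos : 0 < ε := by
      rw [hε]
      have : r - r' ≠ 0 := sub_ne_zero.mpr hrr
      positivity
    have hsub : Set.range (ratSeq r) ∩ Set.range (ratSeq r') ⊆
        (ratSeq r '' {k | ε ≤ 1 / (k + 1 : ℝ)}) ∪ (ratSeq r' '' {k | ε ≤ 1 / (k + 1 : ℝ)}) := by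
      rintro x ⟨⟨k, rfl⟩, ⟨k', hk'⟩⟩
      by_contra hx
      simp only [Set.mem_union, not_or] at hx
      obtain ⟨hx1, hx2⟩ := hx
      have hk1 : ¬ (ε ≤ 1 / (k + 1 : ℝ)) := fun h => hx1 ⟨k, h, rfl⟩
      have hk2 : ¬ (ε ≤ 1 / (k' + 1 : ℝ)) := fun h => hx2 ⟨k', h, hk'⟩
      push_neg at hk1 hk2
      have c1 := ratSeq_close r k ε hk1
      have c2 := ratSeq_close r' k' ε hk2
      rw [hk'] at c2
      have habc : |r - r'| ≤ |r - (ratSeq r k : ℝ)| + |(ratSeq r k : ℝ) - r'| := abs_sub_le _ _ _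
      rw [hε] at *
      linarith [abs_sub_comm r' r, abs_sub_comm r ((ratSeq r k : ℝ))]
    exact ((small_finite ε hεpos).image _ |>.union ((small_finite ε hεpos).image _)).subset hsub

/-- If `R : ℓ∞ → ℓ∞` vanishes on `c₀` (an antimatrix operator), then the induced operator
`T = [R]` on `ℓ∞/c₀` factors through `ℓ∞` and is locally null. -/
theorem statement11 (R : ellInfty →L[ℝ] ellInfty) (hR : ∀ f ∈ czero, R f = 0)
    (T : ellInftyModCzero →L[ℝ] ellInftyModCzero)
    (hT : ∀ f : ellInfty, T (czero.mkQ f) = czero.mkQ (R f)) :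
    (∃ (R₁ : ellInftyModCzero →L[ℝ] ellInfty) (R₂ : ellInfty →L[ℝ] ellInftyModCzero),
      T = R₂.comp R₁) ∧ LocallyNull T := by
  classical
  constructor
  · -- factorization
    have hker : czero ≤ LinearMap.ker (R : ellInfty →ₗ[ℝ] ellInfty) := by
      intro f hf
      simp [LinearMap.mem_ker, hR f hf]
    have hcont : Continuous (czero.liftQ (R : ellInfty →ₗ[ℝ] ellInfty) hker) := by
      rw [(Submodule.isOpenQuotientMap_mkQ czero).isQuotientMap.continuous_iff]
      exact R.continuous
    refine ⟨⟨czero.liftQ (R : ellInfty →ₗ[ℝ] ellInfty) hker, hcont⟩,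
      ⟨czero.mkQ, continuous_quot_mk⟩, ?_⟩
    ext x
    obtain ⟨f, rfl⟩ := Submodule.mkQ_surjective czero x
    show T (czero.mkQ f) = czero.mkQ (czero.liftQ (R : ellInfty →ₗ[ℝ] ellInfty) hker (czero.mkQ f))
    rw [hT f]
    rfl
  · -- locally null
    intro A hA
    by_contra hcon
    push_neg at hcon
    obtain ⟨B, hBsub, hBinf, hBad⟩ := exists_ad_family A hA
    have key : ∀ r : ℝ, ∃ f : ellInfty, (∀ n ∉ B r, f n = 0) ∧
        ¬ Tendsto (⇑(R f)) atTop (𝓝 (0:ℝ)) := by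
      intro r
      obtain ⟨f, hf1, hf2⟩ := hcon (B r) (hBsub r) (hBinf r)
      refine ⟨f, hf1, fun ht => hf2 ?_⟩
      rw [hT f, Submodule.mkQ_apply, Submodule.Quotient.mk_eq_zero]
      exact ht
    have key2 : ∀ r : ℝ, ∃ (f : ellInfty) (m : ℕ), ‖f‖ ≤ 1 ∧ (∀ n ∉ B r, f n = 0) ∧
        {n | 1/(m+1:ℝ) ≤ |(R f) n|}.Infinite := by
      intro r
      obtain ⟨f, hf1, hf2⟩ := key r
      obtain ⟨ε, hε, hinf⟩ := not_tendsto_exists _ hf2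
      set c : ℝ := max 1 ‖f‖ with hc
      have hc1 : 1 ≤ c := le_max_left _ _
      have hc0 : 0 < c := lt_of_lt_of_le one_pos hc1
      obtain ⟨m, hm⟩ := exists_nat_ge (c/ε)
      refine ⟨c⁻¹ • f, m, ?_, ?_, ?_⟩
      · rw [BoundedContinuousFunction.norm_le zero_le_one]
        intro n
        have heval : (c⁻¹ • f) n = c⁻¹ * f n := rfl
        rw [Real.norm_eq_abs, heval, abs_mul, abs_inv, abs_of_pos hc0]
        have h2 : |f n| ≤ ‖f‖ := by
          rw [← Real.norm_eq_abs]; exact f.norm_coe_le_norm n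
        calc c⁻¹ * |f n| ≤ c⁻¹ * c :=
              mul_le_mul_of_nonneg_left (le_trans h2 (le_max_right _ _)) (by positivity)
          _ = 1 := inv_mul_cancel₀ (ne_of_gt hc0)
      · intro n hn
        simp [hf1 n hn]
      · apply hinf.mono
        intro n hn
        simp only [Set.mem_setOf_eq] at hn ⊢
        have hRc : (R (c⁻¹ • f)) n = c⁻¹ * (R f) n := by
          rw [map_smul]
          simp
        rw [hRc, abs_mul, abs_inv, abs_of_pos hc0]
        have h1 : 1/(m+1:ℝ) ≤ ε / c := by
          rw [div_le_div_iff₀ (by positivity) hc0]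
          have : c / ε ≤ (m:ℝ) := hm
          rw [div_le_iff₀ hε] at this
          linarith
        calc 1/(m+1:ℝ) ≤ ε / c := h1
          _ ≤ c⁻¹ * |(R f) n| := by
            rw [div_eq_inv_mul]
            exact mul_le_mul_of_nonneg_left hn (by positivity)
    choose F M hF1 hF2 hF3 using key2
    -- pigeonhole
    have pigeon : ∃ p : ℕ × ℕ, {r : ℝ | (M r, (hF3 r).nonempty.some) = p}.Infinite := by
      by_contra h
      push_neg at h
      apply Cardinal.not_countable_real
      have huniv : (Set.univ : Set ℝ) =
          ⋃ p : ℕ × ℕ, {r : ℝ | (M r, (hF3 r).nonempty.some) = p} := by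
        ext r
        simp only [Set.mem_univ, Set.mem_iUnion, Set.mem_setOf_eq, true_iff]
        exact ⟨_, rfl⟩
      rw [huniv]
      exact Set.countable_iUnion (fun p => (h p).countable)
    obtain ⟨⟨m, n₀⟩, hS⟩ := pigeon
    set δ : ℝ := 1/(m+1:ℝ) with hδdef
    have hδ : 0 < δ := by rw [hδdef]; positivity
    have hSprop : ∀ r ∈ {r : ℝ | (M r, (hF3 r).nonempty.some) = (m, n₀)},
        δ ≤ |(R (F r)) n₀| := by
      intro r hr
      have h2 : 1/(M r + 1 : ℝ) ≤ |(R (F r)) ((hF3 r).nonempty.some)| :=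
        (hF3 r).nonempty.some_mem
      have hm : M r = m := congrArg Prod.fst hr
      have hn : (hF3 r).nonempty.some = n₀ := congrArg Prod.snd hr
      rw [hn] at h2
      have hδeq : δ = 1/((M r : ℝ)+1) := by rw [hδdef, hm]
      rw [hδeq]
      exact h2
    set N : ℕ := ⌊‖R‖/δ⌋₊ + 1 with hN
    obtain ⟨t, htS, htcard⟩ := hS.exists_subset_card_eq N
    set sgn : ℝ → ℝ := fun x => if 0 ≤ x then 1 else -1 with hsgn
    have sgn_mul : ∀ x : ℝ, sgn x * x = |x| := by
      intro x
      rw [hsgn]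
      by_cases h : 0 ≤ x
      · simp [h, abs_of_nonneg h]
      · simp [h, abs_of_neg (not_le.mp h)]
    have sgn_abs : ∀ x : ℝ, |sgn x| = 1 := by
      intro x
      rw [hsgn]
      by_cases h : 0 ≤ x <;> simp [h]
    set g : ellInfty := ∑ r ∈ t, sgn ((R (F r)) n₀) • F r with hg
    set Ffin : Set ℕ := ⋃ r ∈ (t : Set ℝ), ⋃ r' ∈ (t : Set ℝ) \ {r}, (B r ∩ B r') with hFfin
    have hFfinite : Ffin.Finite := by
      rw [hFfin]
      apply Set.Finite.biUnion t.finite_toSet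
      intro r _
      apply Set.Finite.biUnion (t.finite_toSet.diff)
      intro r' hr'
      exact hBad r r' (fun h => hr'.2 (by simp [h.symm]))
    -- evaluation of g
    have hg_apply : ∀ n : ℕ, g n = ∑ r ∈ t, sgn ((R (F r)) n₀) * (F r n) := by
      intro n
      rw [hg, BoundedContinuousFunction.coe_sum, Finset.sum_apply]
      simp
    -- g1: restriction to Ffin
    set g1 : ellInfty := BoundedContinuousFunction.ofNormedAddCommGroup
      (Ffin.indicator (⇑g)) continuous_of_discreteTopology ‖g‖
      (fun n => by
        by_cases h : n ∈ Ffin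
        · rw [Set.indicator_of_mem h]
          exact g.norm_coe_le_norm n
        · rw [Set.indicator_of_notMem h]
          simp) with hg1
    have hg1_apply : ∀ n, g1 n = Ffin.indicator (⇑g) n := fun n => rfl
    have hg1mem : g1 ∈ czero := by
      rw [mem_czero_iff]
      apply finsupp_tendsto
      apply hFfinite.subset
      intro n hn
      simp only [Set.mem_setOf_eq] at hn
      by_contra h
      exact hn (by rw [hg1_apply, Set.indicator_of_notMem h])
    set g2 : ellInfty := g - g1 with hg2
    have hg2_bound : ∀ n, |g2 n| ≤ 1 := by
      intro n
      rw [hg2]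
      simp only [BoundedContinuousFunction.coe_sub, Pi.sub_apply]
      by_cases h : n ∈ Ffin
      · rw [hg1_apply, Set.indicator_of_mem h]
        simp
      · rw [hg1_apply, Set.indicator_of_notMem h, sub_zero, hg_apply]
        by_cases hex : ∃ r₀ ∈ t, n ∈ B r₀
        · obtain ⟨r₀, hr₀t, hr₀⟩ := hex
          rw [Finset.sum_eq_single_of_mem r₀ hr₀t (fun b hb hbne => by
            have hnb : n ∉ B b := by
              intro hnb
              apply h
              rw [hFfin]
              refine Set.mem_biUnion hb ?_
              refine Set.mem_biUnion (show r₀ ∈ (t : Set ℝ) \ {b} from ⟨hr₀t, fun hc => hbne (by simpa using hc.symm)⟩) ?_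
              exact ⟨hnb, hr₀⟩
            rw [hF2 b n hnb, mul_zero])]
          rw [abs_mul, sgn_abs, one_mul]
          calc |F r₀ n| ≤ ‖F r₀‖ := (F r₀).norm_coe_le_norm n
            _ ≤ 1 := hF1 r₀
        · push_neg at hex
          rw [Finset.sum_eq_zero (fun r hr => by rw [hF2 r n (hex r hr), mul_zero])]
          simp
    have hg2_norm : ‖g2‖ ≤ 1 := by
      rw [BoundedContinuousFunction.norm_le zero_le_one]
      intro n
      simpa using hg2_bound n
    -- R g = R g2
    have hRg : R g = R g2 := by
      rw [hg2, map_sub, hR g1 hg1mem, sub_zero]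
    -- upper bound
    have hupper : |(R g) n₀| ≤ ‖R‖ := by
      rw [hRg]
      calc |(R g2) n₀| ≤ ‖R g2‖ := (R g2).norm_coe_le_norm n₀
        _ ≤ ‖R‖ * ‖g2‖ := R.le_opNorm g2
        _ ≤ ‖R‖ * 1 := mul_le_mul_of_nonneg_left hg2_norm (norm_nonneg R)
        _ = ‖R‖ := mul_one _
    -- lower bound
    have hRg_apply : (R g) n₀ = ∑ r ∈ t, sgn ((R (F r)) n₀) * ((R (F r)) n₀) := by
      rw [hg, map_sum, BoundedContinuousFunction.coe_sum, Finset.sum_apply]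
      congr 1
      ext r
      rw [map_smul]
      simp
    have hlower : (N : ℝ) * δ ≤ (R g) n₀ := by
      rw [hRg_apply]
      have : ∀ r ∈ t, δ ≤ sgn ((R (F r)) n₀) * ((R (F r)) n₀) := by
        intro r hr
        rw [sgn_mul]
        exact hSprop r (htS hr)
      calc (N : ℝ) * δ = t.card • δ := by rw [htcard, nsmul_eq_mul]
        _ ≤ ∑ r ∈ t, sgn ((R (F r)) n₀) * ((R (F r)) n₀) := Finset.card_nsmul_le_sum t _ _ this
    have hNδ : ‖R‖ < (N : ℝ) * δ := by
      have h1 : ‖R‖/δ < (N : ℝ) := by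
        rw [hN]
        push_cast
        exact Nat.lt_floor_add_one _
      rw [div_lt_iff₀ hδ] at h1
      linarith
    have : (N : ℝ) * δ ≤ ‖R‖ := le_trans (hlower.trans (le_abs_self _)) hupper
    linarith
end
end
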